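/- Suppose m ≥ 3 and λ_i = 1/m for every i ∈ I, let Q_1,…,Q_m : X → X be firmly nonexpansive, let x_0 ∈ 𝐗, and define x_{n+1} = (J∘R)x_n for all n. If J∘R has no fixed point in 𝐗, then ‖x_n‖ → +∞. -/

import Mathlib

open Filter

section aux
variable {E : Type*} [NormedAddCommGroup E] [InnerProductSpace ℝ E]

lemma aux_sq_le {a b : ℝ} (ha : 0 ≤ a) (hb : 0 ≤ b) (h : a^2 ≤ b^2) : a ≤ b := by
  nlinarith

lemma aux_main [CompleteSpace E] (T : E → E) (β : ℝ) (hβ : 0 < β)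
    (hT : ∀ a b, ‖T a - T b‖^2 + β*‖(a - T a) - (b - T b)‖^2 ≤ ‖a - b‖^2)
    (x : ℕ → E) (hrec : ∀ n, x (n+1) = T (x n))
    (hfix : ¬ ∃ p, T p = p) :
    Tendsto (fun n => ‖x n‖) atTop atTop := by
  -- nonexpansive
  have hne : ∀ a b : E, ‖T a - T b‖ ≤ ‖a - b‖ := by
    intro a b
    have h := hT a b
    have h2 : β*‖(a - T a) - (b - T b)‖^2 ≥ 0 := by positivity
    exact aux_sq_le (norm_nonneg _) (norm_nonneg _) (by nlinarith)
  by_contra hcon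
  -- get M with frequently ‖x n‖ < M
  rw [tendsto_atTop] at hcon
  push_neg at hcon
  obtain ⟨M, hM⟩ := hcon
  have hS : ∀ N : ℕ, ∃ n, N ≤ n ∧ ‖x n‖ < M := by
    intro N
    obtain ⟨n, hn1, hn2⟩ := (frequently_atTop.mp hM) N
    exact ⟨n, hn1, hn2⟩
  -- basic orbit facts
  obtain ⟨u, hu⟩ : ∃ u : ℕ → E, ∀ n, u n = x n - x (n+1) := ⟨_, fun _ => rfl⟩
  have hmono : ∀ (k n p : ℕ), ‖x (n+k) - x (n+p+k)‖ ≤ ‖x n - x (n+p)‖ := by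
    intro k
    induction k with
    | zero => intro n p; simp
    | succ k ih =>
      intro n p
      have : ‖x (n+k+1) - x (n+p+k+1)‖ ≤ ‖x (n+k) - x (n+p+k)‖ := by
        rw [hrec, hrec]; exact hne _ _
      calc ‖x (n+(k+1)) - x (n+p+(k+1))‖ = ‖x (n+k+1) - x (n+p+k+1)‖ := by ring_nf
        _ ≤ ‖x (n+k) - x (n+p+k)‖ := this
        _ ≤ ‖x n - x (n+p)‖ := ih n p
  have huanti : Antitone (fun n => ‖u n‖) := by
    refine antitone_nat_of_succ_le ?_
    intro n
    have h := hmono 1 n 1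
    rw [hu, hu]
    simpa using h
  set d : ℝ := ⨅ n, ‖u n‖ with hd
  have hbdd : BddBelow (Set.range fun n => ‖u n‖) := ⟨0, by rintro y ⟨n, rfl⟩; positivity⟩
  have hud : Tendsto (fun n => ‖u n‖) atTop (nhds d) := tendsto_atTop_ciInf huanti hbdd
  have hd0 : 0 ≤ d := le_ciInf fun n => norm_nonneg _
  -- summability of ‖u n - u (n+k)‖^2 for each k
  have hsum : ∀ k : ℕ, Tendsto (fun n => ‖u n - u (n+k)‖) atTop (nhds 0) := by
    intro k
    have hstep : ∀ n : ℕ, β * ‖u n - u (n+k)‖^2 ≤ ‖x n - x (n+k)‖^2 - ‖x (n+1) - x (n+k+1)‖^2 := by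
      intro n
      have h := hT (x n) (x (n+k))
      rw [← hrec, ← hrec] at h
      have he : (x n - x (n+1)) - (x (n+k) - x (n+k+1)) = u n - u (n+k) := by rw [hu, hu]
      rw [he] at h
      linarith
    have hsummable : Summable (fun n => β * ‖u n - u (n+k)‖^2) := by
      apply summable_of_sum_range_le (c := ‖x 0 - x k‖^2)
      · intro n; positivity
      · intro N
        calc ∑ n ∈ Finset.range N, β * ‖u n - u (n+k)‖^2
            ≤ ∑ n ∈ Finset.range N, (‖x n - x (n+k)‖^2 - ‖x (n+1) - x (n+k+1)‖^2) :=
              Finset.sum_le_sum fun n _ => hstep n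
          _ = ‖x 0 - x k‖^2 - ‖x N - x (N+k)‖^2 := by
              have h := Finset.sum_range_sub' (fun n => ‖x n - x (n+k)‖^2) N
              simp only [Nat.zero_add] at h
              rw [← h]
              apply Finset.sum_congr rfl
              intro n _
              have : n + 1 + k = n + k + 1 := by ring
              rw [this]
          _ ≤ ‖x 0 - x k‖^2 := by nlinarith [sq_nonneg ‖x N - x (N+k)‖]
    have h0 : Tendsto (fun n => β * ‖u n - u (n+k)‖^2) atTop (nhds 0) :=
      hsummable.tendsto_atTop_zero
    have h1 : Tendsto (fun n => ‖u n - u (n+k)‖^2) atTop (nhds 0) := by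
      have h1' := h0.const_mul β⁻¹
      have he : (fun n => β⁻¹ * (β * ‖u n - u (n+k)‖^2)) = fun n => ‖u n - u (n+k)‖^2 := by
        funext n
        field_simp
      rw [he] at h1'
      simpa using h1' 
    have h2 : Tendsto (fun n => Real.sqrt (‖u n - u (n+k)‖^2)) atTop (nhds (Real.sqrt 0)) :=
      (Real.continuous_sqrt.tendsto 0).comp h1
    simpa [Real.sqrt_sq (norm_nonneg _)] using h2

  -- telescoping sum for x n - x (n+P)
  have htel : ∀ (n P : ℕ), x n - x (n+P) = ∑ j ∈ Finset.range P, u (n+j) := by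
    intro n P
    induction P with
    | zero => simp
    | succ P ih =>
      rw [Finset.sum_range_succ, ← ih, hu]
      have h : n + (P+1) = (n + P) + 1 := by ring
      rw [h]
      abel
  -- key lower bound: P * d ≤ ‖x n - x (n+P)‖ + error
  have hlow : ∀ (n P : ℕ), (P:ℝ) * d - (∑ j ∈ Finset.range P, ‖u n - u (n+j)‖)
      ≤ ‖x n - x (n+P)‖ := by
    intro n P
    have h1 : (P:ℝ) • u n - (x n - x (n+P)) = ∑ j ∈ Finset.range P, (u n - u (n+j)) := by
      rw [htel n P, Finset.sum_sub_distrib, Finset.sum_const, Finset.card_range,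
        Nat.cast_smul_eq_nsmul ℝ]
    have h2 : ‖(P:ℝ) • u n - (x n - x (n+P))‖ ≤ ∑ j ∈ Finset.range P, ‖u n - u (n+j)‖ := by
      rw [h1]; exact norm_sum_le _ _
    have h3 : ‖(P:ℝ) • u n‖ - ‖x n - x (n+P)‖ ≤ ‖(P:ℝ) • u n - (x n - x (n+P))‖ :=
      norm_sub_norm_le _ _
    have h4 : ‖(P:ℝ) • u n‖ = (P:ℝ) * ‖u n‖ := by
      rw [norm_smul]; simp
    have h5 : d ≤ ‖u n‖ := ciInf_le hbdd n
    have h6 : (P:ℝ) * d ≤ (P:ℝ) * ‖u n‖ := by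
      apply mul_le_mul_of_nonneg_left h5 (by positivity)
    linarith
  -- d = 0
  have hM0 : 0 < M := by
    obtain ⟨n, -, hn⟩ := hS 0
    exact lt_of_le_of_lt (norm_nonneg _) hn
  have hdzero : d = 0 := by
    by_contra hne0
    have hdpos : 0 < d := lt_of_le_of_ne hd0 (Ne.symm hne0)
    obtain ⟨a, -, ha2⟩ := hS 0
    obtain ⟨b, hb1, hb2⟩ := hS (a + Nat.ceil ((2*M)/d) + 1)
    have hab : a ≤ b := by omega
    set P : ℕ := b - a with hP
    have hba : b = a + P := by omega
    have hPbig : (2*M)/d < (P:ℝ) := by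
      have h1 : Nat.ceil ((2*M)/d) + 1 ≤ P := by omega
      have h2 : (2*M)/d ≤ (Nat.ceil ((2*M)/d) : ℝ) := Nat.le_ceil _
      have h3 : ((Nat.ceil ((2*M)/d) + 1 : ℕ) : ℝ) ≤ (P:ℝ) := by exact_mod_cast h1
      push_cast at h3
      linarith
    have h2M : (P:ℝ) * d ≤ 2*M := by
      -- for every n ≥ a: ‖x n - x (n+P)‖ ≤ ‖x a - x b‖ < 2M; let n → ∞
      have hub : ∀ k : ℕ, (P:ℝ)*d - (∑ j ∈ Finset.range P, ‖u (a+k) - u (a+k+j)‖) ≤ 2*M := by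
        intro k
        have hm := hmono k a P
        have hl := hlow (a+k) P
        have hout : ‖x a - x (a+P)‖ < 2*M := by
          rw [← hba]
          calc ‖x a - x b‖ ≤ ‖x a‖ + ‖x b‖ := norm_sub_le _ _
            _ < 2*M := by linarith
        have hm' : ‖x (a+k) - x (a+k+P)‖ ≤ ‖x a - x (a+P)‖ := by
          have hh : a + P + k = a + k + P := by ring
          rw [hh] at hm
          exact hm
        linarith
      have herr : Tendsto (fun k => (P:ℝ)*d - (∑ j ∈ Finset.range P, ‖u (a+k) - u (a+k+j)‖))
          atTop (nhds ((P:ℝ)*d)) := by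
        have hsum2 : Tendsto (fun k => ∑ j ∈ Finset.range P, ‖u (a+k) - u (a+k+j)‖)
            atTop (nhds 0) := by
          have : Tendsto (fun k => ∑ j ∈ Finset.range P, ‖u (a+k) - u (a+k+j)‖)
              atTop (nhds (∑ j ∈ Finset.range P, (0:ℝ))) := by
            apply tendsto_finset_sum
            intro j _
            have hj := hsum j
            have hshift : Tendsto (fun k : ℕ => a + k) atTop atTop :=
              tendsto_atTop_atTop.mpr fun b => ⟨b, fun n hn => le_trans hn (Nat.le_add_left n a)⟩
            exact (hj.comp hshift)
          simpa using this
        have := (tendsto_const_nhds (x := (P:ℝ)*d) (f := atTop)).sub hsum2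
        simpa using this
      exact le_of_tendsto herr (Filter.Eventually.of_forall hub)
    have : 2*M < (P:ℝ)*d := by
      rw [div_lt_iff₀ hdpos] at hPbig
      linarith [hPbig]
    linarith
  have hu0 : Tendsto (fun n => ‖u n‖) atTop (nhds 0) := hdzero ▸ hud
  -- ultrafilter asymptotic center
  set S : Set ℕ := {n | ‖x n‖ < M} with hSdef
  have hneS : (atTop ⊓ 𝓟 S).NeBot := by
    rw [inf_principal_neBot_iff]
    intro V hV
    rw [mem_atTop_sets] at hV
    obtain ⟨N, hN⟩ := hV
    obtain ⟨n, hn1, hn2⟩ := hS N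
    exact ⟨n, hN n hn1, hn2⟩
  obtain ⟨U, hUle⟩ := exists_ultrafilter_le (atTop ⊓ 𝓟 S)
  have hUtop : (U : Filter ℕ) ≤ atTop := hUle.trans inf_le_left
  have hUS : S ∈ U := le_principal_iff.mp (hUle.trans inf_le_right)
  have hL : ∀ y : E, ∃ a, Tendsto (fun n => ‖x n - y‖^2) (U : Filter ℕ) (nhds a) := by
    intro y
    have hmem : (U.map (fun n => ‖x n - y‖^2) : Filter ℝ) ≤ 𝓟 (Set.Icc 0 ((M+‖y‖)^2)) := by
      rw [le_principal_iff]
      rw [Ultrafilter.coe_map, Filter.mem_map]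
      apply Filter.mem_of_superset hUS
      intro n hn
      have hn' : ‖x n‖ < M := hn
      constructor
      · positivity
      · have h1 : ‖x n - y‖ ≤ ‖x n‖ + ‖y‖ := norm_sub_le _ _
        have h2 : ‖x n - y‖ ≤ M + ‖y‖ := by linarith
        exact pow_le_pow_left₀ (norm_nonneg _) h2 2
    obtain ⟨a, -, ha⟩ := isCompact_Icc.ultrafilter_le_nhds (U.map _) hmem
    exact ⟨a, ha⟩
  choose φ hφ using hL
  have hφ0 : ∀ y, 0 ≤ φ y := fun y => ge_of_tendsto' (hφ y) (fun n => sq_nonneg _)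
  have hbphi : BddBelow (Set.range φ) := ⟨0, by rintro r ⟨y, rfl⟩; exact hφ0 y⟩
  set μ : ℝ := ⨅ y, φ y with hμ
  have hμle : ∀ y, μ ≤ φ y := fun y => ciInf_le hbphi y
  -- parallelogram identity for φ
  have hPid : ∀ y z : E, φ y + φ z = 2 * φ ((2:ℝ)⁻¹ • (y + z)) + ‖y - z‖^2/2 := by
    intro y z
    have hpt : ∀ a : E, ‖a - y‖^2 + ‖a - z‖^2 = 2*‖a - (2:ℝ)⁻¹ • (y+z)‖^2 + ‖y - z‖^2/2 := by
      intro a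
      have hp := parallelogram_law_with_norm ℝ (a - y) (a - z)
      have h2 : (a - y) + (a - z) = (2:ℝ) • (a - (2:ℝ)⁻¹ • (y+z)) := by
        rw [smul_sub, smul_inv_smul₀ (two_ne_zero)]
        rw [two_smul]
        abel
      have h3 : (a - y) - (a - z) = z - y := by abel
      rw [h2, h3, norm_smul] at hp
      simp only [Real.norm_ofNat] at hp
      have h4 : ‖z - y‖ = ‖y - z‖ := norm_sub_rev _ _
      rw [h4] at hp
      nlinarith [hp]
    have t1 := (hφ y).add (hφ z)
    have t2 := ((hφ ((2:ℝ)⁻¹ • (y+z))).const_mul 2).add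
      (tendsto_const_nhds (x := ‖y - z‖^2/2) (f := (U : Filter ℕ)))
    have he : (fun n => ‖x n - y‖^2 + ‖x n - z‖^2)
        = (fun n => 2*‖x n - ((2:ℝ)⁻¹ • (y+z))‖^2 + ‖y - z‖^2/2) := funext (fun n => hpt (x n))
    rw [he] at t1
    exact tendsto_nhds_unique t1 t2
  -- minimizing sequence
  have hys : ∀ j : ℕ, ∃ y : E, φ y < μ + 1/(j+1) := by
    intro j
    apply exists_lt_of_ciInf_lt
    have : (0:ℝ) < 1/((j:ℝ)+1) := by positivity
    linarith
  choose ys hys2 using hys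
  have hcauchy : CauchySeq ys := by
    refine cauchySeq_of_le_tendsto_0 (fun N => Real.sqrt (4/((N:ℝ)+1))) ?_ ?_
    · intro j l N hj hl
      have hid := hPid (ys j) (ys l)
      have h1 : μ ≤ φ ((2:ℝ)⁻¹ • (ys j + ys l)) := hμle _
      have h2 : φ (ys j) < μ + 1/((j:ℝ)+1) := hys2 j
      have h3 : φ (ys l) < μ + 1/((l:ℝ)+1) := hys2 l
      have hj' : 1/((j:ℝ)+1) ≤ 1/((N:ℝ)+1) := by
        apply one_div_le_one_div_of_le
        · positivity
        · have : (N:ℝ) ≤ (j:ℝ) := by exact_mod_cast hj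
          linarith
      have hl' : 1/((l:ℝ)+1) ≤ 1/((N:ℝ)+1) := by
        apply one_div_le_one_div_of_le
        · positivity
        · have : (N:ℝ) ≤ (l:ℝ) := by exact_mod_cast hl
          linarith
      have hsq : ‖ys j - ys l‖^2 ≤ 4/((N:ℝ)+1) := by
        have h4 : ‖ys j - ys l‖^2/2 = φ (ys j) + φ (ys l) - 2*φ ((2:ℝ)⁻¹ • (ys j + ys l)) := by
          linarith
        have : 4/((N:ℝ)+1) = 2*(1/((N:ℝ)+1)) + 2*(1/((N:ℝ)+1)) := by ring
        rw [this]
        linarith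
      rw [dist_eq_norm]
      have hs := Real.sqrt_le_sqrt hsq
      rwa [Real.sqrt_sq (norm_nonneg _)] at hs
    · have h0 : Tendsto (fun N : ℕ => 4/((N:ℝ)+1)) atTop (nhds 0) := by
        have := tendsto_one_div_add_atTop_nhds_zero_nat.const_mul (4:ℝ)
        simpa [mul_one_div, div_eq_mul_inv] using this
      have h1 := (Real.continuous_sqrt.tendsto 0).comp h0
      have he : ((fun t => Real.sqrt t) ∘ fun N : ℕ => 4/((N:ℝ)+1))
          = fun N : ℕ => Real.sqrt (4/((N:ℝ)+1)) := rfl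
      rw [he, Real.sqrt_zero] at h1
      exact h1
  obtain ⟨c, hc⟩ := cauchySeq_tendsto_of_complete hcauchy
  -- Lipschitz-type bound for φ
  have hLip : ∀ y z : E, φ y ≤ φ z + (2*M + 3*‖z‖ + ‖y‖) * ‖y - z‖ := by
    intro y z
    apply le_of_tendsto_of_tendsto (hφ y)
      ((hφ z).add (tendsto_const_nhds (x := (2*M + 3*‖z‖ + ‖y‖) * ‖y - z‖)))
    apply Filter.mem_of_superset hUS
    intro n hn
    have hn' : ‖x n‖ < M := hn
    have ht : ‖x n - y‖ ≤ ‖x n - z‖ + ‖y - z‖ := by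
      have he : x n - y = (x n - z) - (y - z) := by abel
      rw [he]
      exact norm_sub_le _ _
    have hb : ‖x n - z‖ ≤ M + ‖z‖ := by
      have := norm_sub_le (x n) z
      linarith
    have hyz : ‖y - z‖ ≤ ‖y‖ + ‖z‖ := norm_sub_le _ _
    have hp := pow_le_pow_left₀ (norm_nonneg _) ht 2
    have hm1 := mul_le_mul_of_nonneg_left hb (norm_nonneg (y - z))
    have hm2 := mul_le_mul_of_nonneg_left hyz (norm_nonneg (y - z))
    show ‖x n - y‖^2 ≤ ‖x n - z‖^2 + (2*M + 3*‖z‖ + ‖y‖) * ‖y - z‖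
    nlinarith [hp, hm1, hm2, norm_nonneg (y - z)]
  have hφys : Tendsto (fun j => φ (ys j)) atTop (nhds μ) := by
    apply tendsto_of_tendsto_of_tendsto_of_le_of_le
      (tendsto_const_nhds) ?_ (fun j => hμle (ys j)) (fun j => le_of_lt (hys2 j))
    have := tendsto_one_div_add_atTop_nhds_zero_nat.const_add μ
    simpa using this
  have hnys : Tendsto (fun j => ‖ys j‖) atTop (nhds ‖c‖) := hc.norm
  have hdys : Tendsto (fun j => ‖c - ys j‖) atTop (nhds 0) := by
    have := ((tendsto_const_nhds (x := c) (f := atTop)).sub hc).norm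
    simpa using this
  have hφc : φ c ≤ μ := by
    have hg : Tendsto (fun j => φ (ys j) + (2*M + 3*‖ys j‖ + ‖c‖) * ‖c - ys j‖)
        atTop (nhds (μ + (2*M + 3*‖c‖ + ‖c‖) * 0)) := by
      apply hφys.add
      apply Tendsto.mul ?_ hdys
      exact ((tendsto_const_nhds.add (hnys.const_mul 3)).add tendsto_const_nhds)
    rw [mul_zero, add_zero] at hg
    exact le_of_tendsto_of_tendsto tendsto_const_nhds hg
      (Filter.Eventually.of_forall (fun j => hLip c (ys j)))
  have hφceq : φ c = μ := le_antisymm hφc (hμle c)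
  -- φ (T c) ≤ μ
  have hTcle : φ (T c) ≤ μ := by
    have hpt : ∀ n, ‖x n - T c‖^2 ≤ (‖u n‖ + ‖x n - c‖)^2 := by
      intro n
      have h1 : ‖x n - T c‖ ≤ ‖u n‖ + ‖x n - c‖ := by
        have he : x n - T c = (x n - x (n+1)) + (x (n+1) - T c) := by abel
        calc ‖x n - T c‖ = ‖(x n - x (n+1)) + (x (n+1) - T c)‖ := by rw [← he]
          _ ≤ ‖x n - x (n+1)‖ + ‖x (n+1) - T c‖ := norm_add_le _ _
          _ ≤ ‖u n‖ + ‖x n - c‖ := by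
              have h2 : ‖x (n+1) - T c‖ ≤ ‖x n - c‖ := by
                rw [hrec]; exact hne _ _
              rw [hu n]
              exact add_le_add le_rfl h2
      exact pow_le_pow_left₀ (norm_nonneg _) h1 2
    have hxc : Tendsto (fun n => ‖x n - c‖) (U : Filter ℕ) (nhds (Real.sqrt (φ c))) := by
      have h := (Real.continuous_sqrt.tendsto (φ c)).comp (hφ c)
      have he : ((fun t => Real.sqrt t) ∘ fun n => ‖x n - c‖^2) = fun n => ‖x n - c‖ := by
        funext n
        simp [Function.comp, Real.sqrt_sq (norm_nonneg _)]
      rwa [he] at h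
    have huU : Tendsto (fun n => ‖u n‖) (U : Filter ℕ) (nhds 0) := hu0.mono_left hUtop
    have hrhs : Tendsto (fun n => (‖u n‖ + ‖x n - c‖)^2) (U : Filter ℕ)
        (nhds ((0 + Real.sqrt (φ c))^2)) := (huU.add hxc).pow 2
    have heq : (0 + Real.sqrt (φ c))^2 = φ c := by
      rw [zero_add, Real.sq_sqrt (hφ0 c)]
    rw [heq] at hrhs
    have := le_of_tendsto_of_tendsto (hφ (T c)) hrhs (Filter.Eventually.of_forall hpt)
    rw [hφceq] at this
    exact this
  -- conclude T c = c
  have hmid : μ ≤ φ ((2:ℝ)⁻¹ • (c + T c)) := hμle _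
  have hid := hPid c (T c)
  have hsq0 : ‖c - T c‖^2 ≤ 0 := by linarith
  have h0 : ‖c - T c‖ = 0 := by nlinarith [norm_nonneg (c - T c)]
  exact hfix ⟨c, (sub_eq_zero.mp (norm_eq_zero.mp h0)).symm⟩
end aux

section glue
variable {X : Type*} [NormedAddCommGroup X] [InnerProductSpace ℝ X]

-- firm nonexpansiveness of J
lemma aux_J (m : ℕ) (Q : Fin m → X → X)
    (hQ : ∀ i x y, ‖Q i x - Q i y‖ ^ 2 + ‖(x - Q i x) - (y - Q i y)‖ ^ 2 ≤ ‖x - y‖ ^ 2)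
    (J : PiLp 2 (fun _ : Fin m => X) → PiLp 2 (fun _ : Fin m => X))
    (hJ : ∀ x i, J x i = Q i (x i)) :
    ∀ a b : PiLp 2 (fun _ : Fin m => X),
      ‖J a - J b‖^2 + ‖(a - J a) - (b - J b)‖^2 ≤ ‖a - b‖^2 := by
  intro a b
  rw [PiLp.norm_sq_eq_of_L2, PiLp.norm_sq_eq_of_L2, PiLp.norm_sq_eq_of_L2,
    ← Finset.sum_add_distrib]
  apply Finset.sum_le_sum
  intro i _
  simp only [PiLp.sub_apply, hJ]
  exact hQ i (a i) (b i)

-- exact averagedness identity for R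
lemma aux_R (m : ℕ) (hm : 3 ≤ m)
    (R : PiLp 2 (fun _ : Fin m => X) → PiLp 2 (fun _ : Fin m => X))
    (hR : ∀ x i, R x i = ((m : ℝ) - 1)⁻¹ • ∑ j ∈ Finset.univ.erase i, x j) :
    ∀ a b : PiLp 2 (fun _ : Fin m => X),
      ‖R a - R b‖^2 + (((m:ℝ)-2)/m) * ‖(a - b) - (R a - R b)‖^2 = ‖a - b‖^2 := by
  intro a b
  have hm3 : (3:ℝ) ≤ (m:ℝ) := by exact_mod_cast hm
  have hm1 : ((m:ℝ) - 1) ≠ 0 := by linarith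
  have hm0 : (m:ℝ) ≠ 0 := by linarith
  set c : ℝ := ((m:ℝ) - 1)⁻¹ with hc
  obtain ⟨z, hz⟩ : ∃ z : Fin m → X, ∀ i, z i = a i - b i := ⟨_, fun _ => rfl⟩
  obtain ⟨s, hs⟩ : ∃ s : X, s = ∑ j, z j := ⟨_, rfl⟩
  have hcomp : ∀ i, (R a - R b) i = c • (s - z i) := by
    intro i
    rw [PiLp.sub_apply, hR, hR, ← smul_sub,
      Finset.sum_erase_eq_sub (Finset.mem_univ i),
      Finset.sum_erase_eq_sub (Finset.mem_univ i)]
    congr 1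
    have h1 : s = (∑ j, a j) - ∑ j, b j := by
      rw [hs]
      simp only [hz]
      rw [Finset.sum_sub_distrib]
    rw [h1, hz]
    abel
  have hab : ∀ i, (a - b) i = z i := by
    intro i
    rw [PiLp.sub_apply, hz]
  have hsum_inner : ∑ i, (inner ℝ (z i) s : ℝ) = ‖s‖^2 := by
    rw [← sum_inner, ← hs, real_inner_self_eq_norm_sq]
  rw [PiLp.norm_sq_eq_of_L2, PiLp.norm_sq_eq_of_L2, PiLp.norm_sq_eq_of_L2]
  have hnc : ‖c‖^2 = c^2 := by rw [Real.norm_eq_abs, sq_abs]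
  have e1 : ∀ i, ‖(R a - R b) i‖^2
      = c^2*‖s‖^2 + c^2*‖z i‖^2 - 2*c^2*(inner ℝ (z i) s : ℝ) := by
    intro i
    rw [hcomp i, norm_smul, mul_pow, hnc, norm_sub_sq_real, real_inner_comm]
    ring
  have e2 : ∀ i, ‖((a - b) - (R a - R b)) i‖^2
      = (1+c)^2*‖z i‖^2 - (2*c+2*c^2)*(inner ℝ (z i) s : ℝ) + c^2*‖s‖^2 := by
    intro i
    rw [PiLp.sub_apply, hab i, hcomp i]
    rw [norm_sub_sq_real (z i) (c • (s - z i)), real_inner_smul_right, inner_sub_right,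
      real_inner_self_eq_norm_sq, norm_smul, mul_pow, hnc,
      norm_sub_sq_real s (z i), real_inner_comm]
    ring
  simp only [e1, e2, hab, Finset.sum_sub_distrib, Finset.sum_add_distrib, ← Finset.mul_sum,
    hsum_inner, Finset.sum_const, Finset.card_univ, Fintype.card_fin, nsmul_eq_mul]
  have hm1' : (-1 + (m:ℝ)) ≠ 0 := by intro h; apply hm1; linarith
  simp only [hc]
  field_simp
  ring

-- combined averagedness inequality for J ∘ R
lemma aux_T (m : ℕ) (hm : 3 ≤ m) (Q : Fin m → X → X)
    (hQ : ∀ i x y, ‖Q i x - Q i y‖ ^ 2 + ‖(x - Q i x) - (y - Q i y)‖ ^ 2 ≤ ‖x - y‖ ^ 2)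
    (R J : PiLp 2 (fun _ : Fin m => X) → PiLp 2 (fun _ : Fin m => X))
    (hR : ∀ x i, R x i = ((m : ℝ) - 1)⁻¹ • ∑ j ∈ Finset.univ.erase i, x j)
    (hJ : ∀ x i, J x i = Q i (x i)) :
    ∀ a b : PiLp 2 (fun _ : Fin m => X),
      ‖J (R a) - J (R b)‖^2 + (((m:ℝ)-2)/(2*m)) * ‖(a - J (R a)) - (b - J (R b))‖^2
        ≤ ‖a - b‖^2 := by
  intro a b
  have hm3 : (3:ℝ) ≤ (m:ℝ) := by exact_mod_cast hm
  have h1 := aux_J m Q hQ J hJ (R a) (R b)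
  have h2 := aux_R m hm R hR a b
  have hβ0 : (0:ℝ) < ((m:ℝ)-2)/m := by
    apply div_pos <;> linarith
  have hβ1 : ((m:ℝ)-2)/m ≤ 1 := by
    rw [div_le_one (by linarith : (0:ℝ) < (m:ℝ))]
    linarith
  have htri : ‖(a - J (R a)) - (b - J (R b))‖
      ≤ ‖(a - b) - (R a - R b)‖ + ‖(R a - J (R a)) - (R b - J (R b))‖ := by
    have he : (a - J (R a)) - (b - J (R b))
        = ((a - b) - (R a - R b)) + ((R a - J (R a)) - (R b - J (R b))) := by abel
    rw [he]
    exact norm_add_le _ _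
  have h3 : ‖(a - J (R a)) - (b - J (R b))‖^2
      ≤ (‖(a - b) - (R a - R b)‖ + ‖(R a - J (R a)) - (R b - J (R b))‖)^2 :=
    pow_le_pow_left₀ (norm_nonneg _) htri 2
  have h4 : (‖(a - b) - (R a - R b)‖ + ‖(R a - J (R a)) - (R b - J (R b))‖)^2
      ≤ 2*‖(a - b) - (R a - R b)‖^2 + 2*‖(R a - J (R a)) - (R b - J (R b))‖^2 := by
    nlinarith [sq_nonneg (‖(a - b) - (R a - R b)‖ - ‖(R a - J (R a)) - (R b - J (R b))‖)]
  have h5 : (((m:ℝ)-2)/(2*m)) * ‖(a - J (R a)) - (b - J (R b))‖^2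
      ≤ (((m:ℝ)-2)/(2*m)) * (2*‖(a - b) - (R a - R b)‖^2
          + 2*‖(R a - J (R a)) - (R b - J (R b))‖^2) := by
    apply mul_le_mul_of_nonneg_left (h3.trans h4)
    apply le_of_lt
    apply div_pos <;> linarith
  have h6 : (((m:ℝ)-2)/(2*m)) * (2*‖(a - b) - (R a - R b)‖^2
          + 2*‖(R a - J (R a)) - (R b - J (R b))‖^2)
      = (((m:ℝ)-2)/m) * ‖(a - b) - (R a - R b)‖^2
        + (((m:ℝ)-2)/m) * ‖(R a - J (R a)) - (R b - J (R b))‖^2 := by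
    field_simp
  have h7 : (((m:ℝ)-2)/m) * ‖(R a - J (R a)) - (R b - J (R b))‖^2
      ≤ ‖(R a - J (R a)) - (R b - J (R b))‖^2 := by
    nlinarith [sq_nonneg ‖(R a - J (R a)) - (R b - J (R b))‖]
  linarith
end glue

/-- For `m ≥ 3` and equal weights `1/m`, if `J ∘ R` has no fixed point,
then the iterates `x_{n+1} = (J ∘ R) x_n` satisfy `‖x_n‖ → +∞`. -/
theorem norm_iterates_tendsto_atTop_of_no_fixed_point
    {X : Type*} [NormedAddCommGroup X] [InnerProductSpace ℝ X] [CompleteSpace X]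
    (m : ℕ) (hm : 3 ≤ m)
    (Q : Fin m → X → X)
    (hQ : ∀ i x y, ‖Q i x - Q i y‖ ^ 2 + ‖(x - Q i x) - (y - Q i y)‖ ^ 2 ≤ ‖x - y‖ ^ 2)
    (R J : PiLp 2 (fun _ : Fin m => X) → PiLp 2 (fun _ : Fin m => X))
    (hR : ∀ x i, R x i = ((m : ℝ) - 1)⁻¹ • ∑ j ∈ Finset.univ.erase i, x j)
    (hJ : ∀ x i, J x i = Q i (x i))
    (x : ℕ → PiLp 2 (fun _ : Fin m => X))
    (hrec : ∀ n, x (n + 1) = J (R (x n)))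
    (hfix : ¬ ∃ p, J (R p) = p) :
    Filter.Tendsto (fun n => ‖x n‖) Filter.atTop Filter.atTop := by
  have hm3 : (3:ℝ) ≤ (m:ℝ) := by exact_mod_cast hm
  have hβ : (0:ℝ) < ((m:ℝ)-2)/(2*m) := by
    apply div_pos <;> linarith
  haveI : CompleteSpace (PiLp 2 fun _ : Fin m => X) := inferInstance
  exact aux_main (fun a => J (R a)) (((m:ℝ)-2)/(2*(m:ℝ))) hβ
    (aux_T m hm Q hQ R J hR hJ) x hrec hfix
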